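/- Let (X,d) be a complete metric space and T : X → X continuous. Suppose there exist functions φₙ : X × X → [0,∞) with d(Tⁿx, Tⁿy) ≤ φₙ(x,y) for all x,y ∈ X and n ∈ ℕ, such that φₙ converges pointwise to φ : X × X → [0,∞) uniformly on B × B for every bounded subset B ⊂ X; and suppose there is ψ : [0,∞) → [0,∞), nondecreasing, right upper semicontinuous, with ψ(t) < t for all t > 0, such that φ(x,y) ≤ ψ(M(x,y)) for all x,y, where M(x,y) = max{d(x,y), d(Tx,x), d(Ty,y), d(Ty,x), d(Tx,y)}. If T has a fixed point p ∈ X (Tp = p), then for every x ∈ X the iterates Tⁿx converge to p. -/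

import Mathlib

open Set Filter Function

/-- if a continuous asymptotic pointwise contraction on a complete
metric space has a fixed point p, then the iterates of every point converge to p. -/
theorem stmt_6 {X : Type*} [MetricSpace X] [CompleteSpace X]
    (T : X → X) (hT : Continuous T)
    (φ : ℕ → X → X → ℝ) (φlim : X → X → ℝ)
    (hφ_nonneg : ∀ n x y, 0 ≤ φ n x y)
    (hφlim_nonneg : ∀ x y, 0 ≤ φlim x y)
    (hd : ∀ n x y, dist (T^[n] x) (T^[n] y) ≤ φ n x y)
    (hconv : ∀ x y, Tendsto (fun n => φ n x y) atTop (nhds (φlim x y)))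
    (hunif : ∀ B : Set X, Bornology.IsBounded B → ∀ ε > 0, ∃ N, ∀ n ≥ N,
      ∀ x ∈ B, ∀ y ∈ B, |φ n x y - φlim x y| ≤ ε)
    (ψ : ℝ → ℝ)
    (hψ_nonneg : ∀ t, 0 ≤ t → 0 ≤ ψ t)
    (hψ_mono : ∀ s t, 0 ≤ s → s ≤ t → ψ s ≤ ψ t)
    (hψ_usc : ∀ t₀, 0 ≤ t₀ → limsup ψ (nhdsWithin t₀ (Ioi t₀)) ≤ ψ t₀)
    (hψ_lt : ∀ t, 0 < t → ψ t < t)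
    (hφψ : ∀ x y, φlim x y ≤ ψ (max (dist x y) (max (dist (T x) x)
      (max (dist (T y) y) (max (dist (T y) x) (dist (T x) y))))))
    (p : X) (hp : T p = p) :
    ∀ x : X, Tendsto (fun n => T^[n] x) atTop (nhds p) := by
  intro x
  have hpfix : ∀ n : ℕ, T^[n] p = p := fun n => Function.iterate_fixed hp n
  -- the orbit together with p is bounded
  obtain ⟨R, hR⟩ : ∃ R, ∀ n, φ n x p ≤ R := by
    obtain ⟨R, hR⟩ := (hconv x p).bddAbove_range
    exact ⟨R, fun n => hR ⟨n, rfl⟩⟩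
  have ha_le : ∀ n, dist (T^[n] x) p ≤ R := by
    intro n
    calc dist (T^[n] x) p = dist (T^[n] x) (T^[n] p) := by rw [hpfix]
      _ ≤ φ n x p := hd n x p
      _ ≤ R := hR n
  set U : ℕ → Set X := fun k => insert p ((fun m => T^[m] x) '' Ici k) with hUdef
  have hpU : ∀ k, p ∈ U k := fun k => mem_insert _ _
  have horbU : ∀ k m, k ≤ m → T^[m] x ∈ U k := fun k m hm =>
    mem_insert_of_mem _ ⟨m, hm, rfl⟩
  have hsub : ∀ k, U k ⊆ Metric.closedBall p R := by
    intro k u hu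
    rcases hu with h | ⟨m, _, rfl⟩
    · rw [h]
      simp only [Metric.mem_closedBall, dist_self]
      exact le_trans (hφ_nonneg 0 x p) (hR 0)
    · exact Metric.mem_closedBall.mpr (ha_le m)
  have hbdd : ∀ k, Bornology.IsBounded (U k) :=
    fun k => Metric.isBounded_closedBall.subset (hsub k)
  have hTclosed : ∀ k, ∀ u ∈ U k, T u ∈ U k := by
    intro k u hu
    rcases hu with h | ⟨m, hm, rfl⟩
    · rw [h, hp]; exact hpU k
    · have hm' : k ≤ m := hm
      have : T (T^[m] x) = T^[m+1] x := (Function.iterate_succ_apply' T m x).symm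
      rw [this]
      exact horbU k (m+1) (le_trans hm' (Nat.le_succ m))
  have hUmono : ∀ i j : ℕ, i ≤ j → U j ⊆ U i := by
    intro i j hij
    exact insert_subset_insert (image_mono (Ici_subset_Ici.mpr hij))
  have hiter : ∀ N k : ℕ, ∀ u' ∈ U (k + N), ∃ u ∈ U k, T^[N] u = u' := by
    intro N k u' hu'
    rcases hu' with h | ⟨m, hm, rfl⟩
    · exact ⟨p, hpU k, (hpfix N).trans h.symm⟩
    · have hm' : k + N ≤ m := hm
      refine ⟨T^[m - N] x, horbU k (m - N) (by omega), ?_⟩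
      rw [← Function.iterate_add_apply]
      congr 1
      omega
  set D : ℕ → ℝ := fun k => Metric.diam (U k) with hDdef
  have hD0 : ∀ k, 0 ≤ D k := fun k => Metric.diam_nonneg
  have hDanti : Antitone D := fun i j hij => Metric.diam_mono (hUmono i j hij) (hbdd i)
  have key : ∀ ε : ℝ, 0 < ε → ∃ N, ∀ k, D (k + N) ≤ ψ (D k) + ε := by
    intro ε hε
    obtain ⟨N, hN⟩ := hunif (U 0) (hbdd 0) ε hε
    refine ⟨N, fun k => ?_⟩
    have hnn : (0:ℝ) ≤ ψ (D k) + ε := add_nonneg (hψ_nonneg _ (hD0 k)) hε.le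
    apply Metric.diam_le_of_forall_dist_le hnn
    intro u' hu' v' hv'
    obtain ⟨u, hu, rfl⟩ := hiter N k u' hu'
    obtain ⟨v, hv, rfl⟩ := hiter N k v' hv'
    have hu0 : u ∈ U 0 := hUmono 0 k (Nat.zero_le k) hu
    have hv0 : v ∈ U 0 := hUmono 0 k (Nat.zero_le k) hv
    have habs := hN N le_rfl u hu0 v hv0
    have h1 : φ N u v ≤ φlim u v + ε := by
      have := abs_le.mp habs
      linarith [this.1, this.2]
    set Muv := max (dist u v) (max (dist (T u) u)
      (max (dist (T v) v) (max (dist (T v) u) (dist (T u) v)))) with hMuv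
    have hM0 : 0 ≤ Muv := le_trans dist_nonneg (le_max_left _ _)
    have hMle : Muv ≤ D k := by
      have hTu : T u ∈ U k := hTclosed k u hu
      have hTv : T v ∈ U k := hTclosed k v hv
      have d1 : dist u v ≤ D k := Metric.dist_le_diam_of_mem (hbdd k) hu hv
      have d2 : dist (T u) u ≤ D k := Metric.dist_le_diam_of_mem (hbdd k) hTu hu
      have d3 : dist (T v) v ≤ D k := Metric.dist_le_diam_of_mem (hbdd k) hTv hv
      have d4 : dist (T v) u ≤ D k := Metric.dist_le_diam_of_mem (hbdd k) hTv hu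
      have d5 : dist (T u) v ≤ D k := Metric.dist_le_diam_of_mem (hbdd k) hTu hv
      simp only [hMuv, max_le_iff]
      exact ⟨d1, d2, d3, d4, d5⟩
    calc dist (T^[N] u) (T^[N] v) ≤ φ N u v := hd N u v
      _ ≤ φlim u v + ε := h1
      _ ≤ ψ Muv + ε := add_le_add_left (hφψ u v) ε
      _ ≤ ψ (D k) + ε := add_le_add_left (hψ_mono Muv (D k) hM0 hMle) ε
  -- the infimum of the diameters
  have hbddbelow : BddBelow (Set.range D) := ⟨0, fun y ⟨k, hk⟩ => hk ▸ hD0 k⟩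
  set L : ℝ := ⨅ k, D k with hLdef
  have hL0 : 0 ≤ L := le_ciInf hD0
  have hDL : Tendsto D atTop (nhds L) := tendsto_atTop_ciInf hDanti hbddbelow
  have hLψ : ∀ t, L < t → L ≤ ψ t := by
    intro t ht
    obtain ⟨k, hk⟩ := exists_lt_of_ciInf_lt ht
    apply le_of_forall_pos_le_add
    intro ε hε
    obtain ⟨N, hN⟩ := key ε hε
    calc L ≤ D (k + N) := ciInf_le hbddbelow (k + N)
      _ ≤ ψ (D k) + ε := hN k
      _ ≤ ψ t + ε := add_le_add_left (hψ_mono (D k) t (hD0 k) hk.le) ε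
  have hLzero : L = 0 := by
    by_contra hne
    have hLpos : 0 < L := lt_of_le_of_ne hL0 (Ne.symm hne)
    have hfreq : ∃ᶠ s in nhdsWithin L (Ioi L), L ≤ ψ s := by
      apply Filter.Eventually.frequently
      exact eventually_mem_nhdsWithin.mono (fun s hs => hLψ s hs)
    have hbu : Filter.IsBoundedUnder (· ≤ ·) (nhdsWithin L (Ioi L)) ψ := by
      refine ⟨ψ (L + 1), ?_⟩
      rw [Filter.eventually_map]
      have hmem : Ioo L (L + 1) ∈ nhdsWithin L (Ioi L) :=
        Ioo_mem_nhdsGT_of_mem ⟨le_refl L, by linarith⟩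
      filter_upwards [hmem] with s hs
      exact hψ_mono s (L + 1) (le_trans hL0 hs.1.le) hs.2.le
    have h2 : L ≤ limsup ψ (nhdsWithin L (Ioi L)) :=
      Filter.le_limsup_of_frequently_le hfreq hbu
    have h3 := hψ_usc L hL0
    have h4 := hψ_lt L hLpos
    linarith
  rw [hLzero] at hDL
  rw [tendsto_iff_dist_tendsto_zero]
  apply squeeze_zero (fun n => dist_nonneg) (fun n => ?_) hDL
  exact Metric.dist_le_diam_of_mem (hbdd n) (horbU n n le_rfl) (hpU n)
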